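/- Let A ⊆ G be finite with |A+A| ≤ K|A| and suppose |kA| ≥ K^{k-ε}|A| for some integer k ≥ 3 and real ε > 0. Then there exists A' ⊆ A with |A'| ≥ |A|/2 and dim(A') ≪ 2^k K^ε log|kA|. -/

import Mathlib

open Finset Pointwise

def Dissociated {G : Type*} [AddCommGroup G] (Λ : Finset G) : Prop :=
  ∀ ε : G → ℤ, (∀ g, ε g = -1 ∨ ε g = 0 ∨ ε g = 1) → (∀ g ∉ Λ, ε g = 0) →
    ∑ g ∈ Λ, ε g • g = 0 → ∀ g, ε g = 0

def nsum {G : Type*} [AddCommGroup G] [DecidableEq G] (A : Finset G) : ℕ → Finset G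
  | 0 => {0}
  | k + 1 => nsum A k + A

section Aux

open NNRat Nat

variable {G : Type*} [AddCommGroup G] [DecidableEq G]

lemma myPetridis (A B : Finset G) (hA : A.Nonempty) :
    ∃ X, X ⊆ A ∧ X.Nonempty ∧ ∀ n : ℕ,
      ((X + n • B).card : ℚ≥0) ≤ ((A + B).card / A.card : ℚ≥0) ^ n * X.card := by
  have hA' : A ∈ A.powerset.erase ∅ :=
    mem_erase_of_ne_of_mem hA.ne_empty (mem_powerset_self _)
  obtain ⟨C, hC, hCmin⟩ :=
    exists_min_image (A.powerset.erase ∅) (fun C ↦ ((C + B).card : ℚ≥0) / C.card) ⟨A, hA'⟩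
  rw [mem_erase, mem_powerset, ← nonempty_iff_ne_empty] at hC
  obtain ⟨hCne, hCA⟩ := hC
  have hC0 : (0 : ℚ≥0) < C.card := by exact_mod_cast hCne.card_pos
  have key : ∀ C' ⊆ C, (C + B).card * C'.card ≤ (C' + B).card * C.card := by
    intro C' hC'
    obtain rfl | hC'ne := C'.eq_empty_or_nonempty
    · simp
    have h0' : (0 : ℚ≥0) < C'.card := by exact_mod_cast hC'ne.card_pos
    exact_mod_cast (div_le_div_iff₀ hC0 h0').1
      (hCmin _ (mem_erase_of_ne_of_mem hC'ne.ne_empty (mem_powerset.2 (hC'.trans hCA))))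
  refine ⟨C, hCA, hCne, fun n ↦ ?_⟩
  have step : ∀ n : ℕ, ((C + n • B).card : ℚ≥0)
      ≤ (((C + B).card : ℚ≥0) / C.card) ^ n * C.card := by
    intro n
    induction n with
    | zero => simp
    | succ n ih =>
      have h1 : ((C + (n+1) • B).card : ℚ≥0) * C.card
          ≤ ((C + B).card : ℚ≥0) * (C + n • B).card := by
        have : C + (n + 1) • B = C + B + n • B := by
          rw [succ_nsmul]; abel_nf
        rw [this]
        have hpp := pluennecke_petridis_inequality_add (n • B) key
        rw [add_comm (n • B) C, add_right_comm C (n • B) B] at hpp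
        exact_mod_cast hpp
      have h2 : ((C + (n+1) • B).card : ℚ≥0) * C.card
          ≤ (((C + B).card : ℚ≥0) * (((C + B).card : ℚ≥0) / C.card) ^ n) * C.card := by
        refine h1.trans ?_
        rw [mul_assoc]
        gcongr
      have h3 : (((C + B).card : ℚ≥0) / C.card) ^ (n+1) * C.card
          = ((C + B).card : ℚ≥0) * (((C + B).card : ℚ≥0) / C.card) ^ n := by
        rw [pow_succ, mul_assoc, div_mul_cancel₀ _ hC0.ne', mul_comm]
      rw [h3]
      exact le_of_mul_le_mul_right h2 hC0
  refine (step n).trans (mul_le_mul_left (pow_le_pow_left' (hCmin A hA') n) _)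

lemma greedy (B : Finset G) (k : ℕ) (A₀ : Finset G) (L : ℚ≥0)
    (hL : ∀ X ⊆ A₀, X.Nonempty → A₀.card < 2 * X.card → ((X + B).card : ℚ≥0) ≤ L * X.card) :
    ∀ n (A : Finset G), A.card ≤ n → A ⊆ A₀ → A₀.card < 2 * A.card →
      (((A₀ \ A) + k • B).card : ℚ≥0) ≤ L ^ k * (A₀ \ A).card →
      ∃ U ⊆ A₀, A₀.card ≤ 2 * U.card ∧ ((U + k • B).card : ℚ≥0) ≤ L ^ k * U.card := by
  intro n
  induction n with
  | zero =>
    intro A hcard hsub hlt _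
    interval_cases h : A.card
    omega
  | succ n ih =>
    intro A hcard hsub hlt hinv
    have hAne : A.Nonempty := card_pos.1 (by omega)
    obtain ⟨X, hXA, hXne, hXbound⟩ := myPetridis A B hAne
    have hA0 : (0 : ℚ≥0) < A.card := by exact_mod_cast hAne.card_pos
    have hr : ((A + B).card / A.card : ℚ≥0) ≤ L := by
      rw [div_le_iff₀ hA0]
      exact hL A hsub hAne hlt
    have hX : ((X + k • B).card : ℚ≥0) ≤ L ^ k * X.card :=
      (hXbound k).trans (mul_le_mul_left (pow_le_pow_left' hr k) _)
    set U₀ := (A₀ \ A) ∪ X with hU₀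
    have hdisj : Disjoint (A₀ \ A) X := (sdiff_disjoint (t := A₀)).mono_right hXA
    have hU₀card : U₀.card = (A₀ \ A).card + X.card := card_union_of_disjoint hdisj
    have hU₀sub : U₀ ⊆ A₀ := union_subset sdiff_subset (hXA.trans hsub)
    have hU₀bound : ((U₀ + k • B).card : ℚ≥0) ≤ L ^ k * U₀.card := by
      have : U₀ + k • B = ((A₀ \ A) + k • B) ∪ (X + k • B) := union_add
      calc ((U₀ + k • B).card : ℚ≥0)
          ≤ (((A₀ \ A) + k • B).card : ℚ≥0) + ((X + k • B).card : ℚ≥0) := by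
            rw [this]; exact_mod_cast card_union_le _ _
        _ ≤ L ^ k * (A₀ \ A).card + L ^ k * X.card := add_le_add hinv hX
        _ = L ^ k * U₀.card := by rw [hU₀card]; push_cast; ring
    by_cases hstop : A₀.card ≤ 2 * U₀.card
    · exact ⟨U₀, hU₀sub, hstop, hU₀bound⟩
    · have hXsubA₀ : X ⊆ A₀ := hXA.trans hsub
      have heq : A₀ \ (A \ X) = U₀ := by
        rw [sdiff_sdiff_right']
        congr 1
        exact inter_eq_right.2 hXsubA₀
      have hcardX : 1 ≤ X.card := hXne.card_pos
      have hcs : (A \ X).card = A.card - X.card := card_sdiff_of_subset hXA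
      have hcs2 : (A₀ \ A).card = A₀.card - A.card := card_sdiff_of_subset hsub
      have hXle : X.card ≤ A.card := card_le_card hXA
      have hAle : A.card ≤ A₀.card := card_le_card hsub
      refine ih (A \ X) (by omega) (sdiff_subset.trans hsub) (by omega) ?_
      rw [heq]
      exact hU₀bound

lemma nsum_eq (A : Finset G) : ∀ k, nsum A k = k • A
  | 0 => by
    simp only [nsum, zero_nsmul]
    rfl
  | k + 1 => by rw [nsum, nsum_eq A k, succ_nsmul]

lemma nsmul_nonempty (A : Finset G) (hA : A.Nonempty) : ∀ k : ℕ, (k • A).Nonempty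
  | 0 => by rw [zero_nsmul]; exact ⟨0, Finset.zero_mem_zero⟩
  | k + 1 => by rw [succ_nsmul]; exact (nsmul_nonempty A hA k).add hA

lemma card_le_card_nsmul (A : Finset G) (hA : A.Nonempty) (k : ℕ) (hk : 1 ≤ k) :
    A.card ≤ (k • A).card := by
  obtain ⟨j, rfl⟩ : ∃ j, k = j + 1 := ⟨k - 1, by omega⟩
  rw [succ_nsmul]
  exact card_le_card_add_left (nsmul_nonempty A hA j)

lemma sum_mem_nsmul (Λ : Finset G) : ∀ (j : ℕ) (S : Finset G), S ⊆ Λ → S.card = j →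
    (∑ g ∈ S, g) ∈ j • Λ
  | 0, S, hS, hcard => by
    rw [card_eq_zero.1 hcard]
    simp only [Finset.sum_empty, zero_nsmul]
    exact Finset.zero_mem_zero
  | j + 1, S, hS, hcard => by
    have hne : S.Nonempty := card_pos.1 (by omega)
    obtain ⟨x, hx⟩ := hne
    have : ∑ g ∈ S, g = (∑ g ∈ S.erase x, g) + x := by
      rw [add_comm, ← Finset.add_sum_erase _ _ hx]
    rw [this, succ_nsmul]
    exact add_mem_add (sum_mem_nsmul Λ j _ ((erase_subset _ _).trans hS)
      (by rw [card_erase_of_mem hx, hcard]; rfl)) (hS hx)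

lemma diss_inj (Λ : Finset G) (hΛ : Dissociated Λ) {S T : Finset G} (hS : S ⊆ Λ) (hT : T ⊆ Λ)
    (h : ∑ g ∈ S, g = ∑ g ∈ T, g) : S = T := by
  set f : G → ℤ := fun g => (if g ∈ S then 1 else 0) - (if g ∈ T then 1 else 0) with hf
  have hz : ∀ g, f g = 0 := by
    refine hΛ f (fun g => by by_cases hgS : g ∈ S <;> by_cases hgT : g ∈ T <;> simp [hf, hgS, hgT])
      (fun g hg => by
        have h1 : g ∉ S := fun h => hg (hS h)
        have h2 : g ∉ T := fun h => hg (hT h)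
        simp [hf, h1, h2]) ?_
    have : ∑ g ∈ Λ, f g • g
        = ∑ g ∈ Λ, ((if g ∈ S then g else 0) - (if g ∈ T then g else 0)) := by
      refine Finset.sum_congr rfl fun g _ => ?_
      by_cases hgS : g ∈ S <;> by_cases hgT : g ∈ T <;> simp [hf, hgS, hgT]
    rw [this, Finset.sum_sub_distrib, Finset.sum_ite_mem, Finset.sum_ite_mem,
      inter_eq_right.2 hS, inter_eq_right.2 hT, h, sub_self]
  ext g
  have := hz g
  by_cases hgS : g ∈ S <;> by_cases hgT : g ∈ T <;> simp [hf, hgS, hgT] at this ⊢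

lemma choose_le_card_nsmul (Λ : Finset G) (hΛ : Dissociated Λ) (j : ℕ) :
    Λ.card.choose j ≤ (j • Λ).card := by
  rw [← card_powersetCard j Λ]
  refine card_le_card_of_injOn (fun S => ∑ g ∈ S, g) (fun S hS => ?_) (fun S hSm T hTm hST => ?_)
  · rw [Finset.mem_coe, mem_powersetCard] at hS
    exact sum_mem_nsmul Λ j S hS.1 hS.2
  · rw [Finset.mem_coe, mem_powersetCard] at hSm hTm
    exact diss_inj Λ hΛ hSm.1 hTm.1 hST

end Aux

lemma endgame (d T0 : ℕ) (L : ℝ) (hT2 : 2 ≤ T0) (hL1 : (1:ℝ) ≤ L)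
    (hchoose : ∀ j : ℕ, (d.choose j : ℝ) ≤ L ^ j * T0) :
    (d : ℝ) ≤ 9 * L * Real.log T0 := by
  have hL0 : (0:ℝ) ≤ L := le_trans zero_le_one hL1
  -- numerics
  obtain ⟨T, hTeq⟩ : ∃ T : ℕ, T0 = T := ⟨_, rfl⟩
  rw [hTeq] at hT2 hchoose ⊢
  have hlogT : Real.log 2 ≤ Real.log T :=
    Real.log_le_log (by norm_num) (by exact_mod_cast hT2)
  have hlog2 : (0.6931471803:ℝ) < Real.log 2 := Real.log_two_gt_d9
  have hlogT0 : (0:ℝ) < Real.log T := lt_of_lt_of_le (by linarith) hlogT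
  obtain ⟨j, hj1, hTj, hjpred⟩ : ∃ j : ℕ, 1 ≤ j ∧ T ≤ 2 ^ j ∧ 2 ^ (j - 1) < T :=
    ⟨Nat.clog 2 T, Nat.clog_pos one_lt_two hT2, Nat.le_pow_clog one_lt_two T,
      Nat.pow_pred_clog_lt_self one_lt_two (by omega)⟩
  have hjlog : (j : ℝ) ≤ 3 * Real.log T := by
    have h1 : (2:ℝ) ^ (j - 1) < T := by exact_mod_cast hjpred
    have h2 : ((j - 1 : ℕ) : ℝ) * Real.log 2 ≤ Real.log T := by
      rw [← Real.log_pow]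
      exact Real.log_le_log (by positivity) h1.le
    have h3 : ((j - 1 : ℕ) : ℝ) = (j : ℝ) - 1 := by
      have : (1:ℕ) ≤ j := hj1
      push_cast [this]
      ring
    rw [h3] at h2
    have hj0 : (0:ℝ) ≤ (j:ℝ) := Nat.cast_nonneg j
    have hmul : (j:ℝ) * 0.6931471803 ≤ (j:ℝ) * Real.log 2 :=
      mul_le_mul_of_nonneg_left hlog2.le hj0
    have e : ((j:ℝ) - 1) * Real.log 2 = (j:ℝ) * Real.log 2 - Real.log 2 := by ring
    rw [e] at h2
    linarith [h2, hlogT, hmul, hlogT0]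
  by_cases hcase : d ≤ 2 * j
  · have : (d : ℝ) ≤ 2 * (j:ℝ) := by exact_mod_cast hcase
    have h6 : (d : ℝ) ≤ 6 * Real.log T := by linarith [hjlog]
    have hx : (0:ℝ) ≤ (L - 1) * Real.log T := mul_nonneg (by linarith) hlogT0.le
    nlinarith [hx, hlogT0, h6]
  · -- large case
    have hjd : j ≤ d := by omega
    have hfacpos : (0:ℝ) < (j.factorial : ℝ) := by exact_mod_cast j.factorial_pos
    have hfac : ((d + 1 - j : ℕ) ^ j : ℝ) ≤ (j.factorial : ℝ) * (d.choose j : ℝ) := by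
      have h := Nat.pow_le_choose j d (α := ℝ)
      rw [div_le_iff₀ hfacpos] at h
      calc ((d + 1 - j : ℕ) ^ j : ℝ) = (((d + 1 - j : ℕ) : ℝ)) ^ j := by norm_cast
        _ ≤ (d.choose j : ℝ) * (j.factorial : ℝ) := h
        _ = (j.factorial : ℝ) * (d.choose j : ℝ) := by ring
    have hjj : (j.factorial : ℝ) ≤ (j:ℝ) ^ j := by exact_mod_cast Nat.factorial_le_pow j
    have hT2j : (T : ℝ) ≤ 2 ^ j := by exact_mod_cast hTj
    have hch : (d.choose j : ℝ) ≤ L ^ j * T := hchoose j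
    have hbase : (((d + 1 - j : ℕ) : ℝ)) ^ j ≤ (2 * (j:ℝ) * L) ^ j := by
      have hLj0 : (0:ℝ) ≤ L ^ j := by positivity
      have hch0 : (0:ℝ) ≤ (d.choose j : ℝ) := by positivity
      calc (((d + 1 - j : ℕ) : ℝ)) ^ j ≤ (j.factorial : ℝ) * (d.choose j : ℝ) := by
            exact_mod_cast hfac
        _ ≤ (j:ℝ) ^ j * (L ^ j * (T:ℝ)) := mul_le_mul hjj hch hch0 (by positivity)
        _ ≤ (j:ℝ) ^ j * (L ^ j * 2 ^ j) := by
            refine mul_le_mul_of_nonneg_left ?_ (by positivity)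
            exact mul_le_mul_of_nonneg_left hT2j (by positivity)
        _ = (2 * (j:ℝ) * L) ^ j := by rw [mul_pow, mul_pow]; ring
    have hle : (((d + 1 - j : ℕ) : ℝ)) ≤ 2 * (j:ℝ) * L :=
      le_of_pow_le_pow_left₀ (by omega) (by positivity) hbase
    have hcastsub : (((d + 1 - j : ℕ) : ℝ)) = (d : ℝ) + 1 - j := by
      have : j ≤ d + 1 := by omega
      push_cast [this]
      ring
    rw [hcastsub] at hle
    have hj0 : (0:ℝ) ≤ (j:ℝ) := Nat.cast_nonneg j
    have hjL : (j:ℝ) ≤ (j:ℝ) * L := le_mul_of_one_le_right hj0 hL1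
    have hd3 : (d : ℝ) ≤ 3 * (j:ℝ) * L := by linarith
    have hfinal : (d : ℝ) ≤ 9 * L * Real.log T := by
      have := mul_le_mul_of_nonneg_right hjlog hL0
      linarith
    exact hfinal

/-- If `|A+A| ≤ K|A|` and `|kA| ≥ K^{k-ε}|A|` for some `k ≥ 3`, `ε > 0`, then there is
`A' ⊆ A` with `|A'| ≥ |A|/2` whose additive dimension is `O(2^k K^ε log |kA|)`,
i.e. every dissociated subset of `A'` has cardinality at most `C 2^k K^ε log |kA|`. -/
theorem stmt2 :
    ∃ C : ℝ, 0 < C ∧ ∀ (G : Type*) [AddCommGroup G] [DecidableEq G]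
      (A : Finset G) (K ε : ℝ) (k : ℕ),
      2 ≤ A.card → 1 ≤ K → 0 < ε → 3 ≤ k →
      ((A + A).card : ℝ) ≤ K * A.card →
      K ^ ((k : ℝ) - ε) * A.card ≤ ((nsum A k).card : ℝ) →
      ∃ A' ⊆ A, (A.card : ℝ) ≤ 2 * A'.card ∧
        ∀ Λ ⊆ A', Dissociated Λ →
          (Λ.card : ℝ) ≤ C * 2 ^ k * K ^ ε * Real.log ((nsum A k).card) := by
  refine ⟨9, by norm_num, ?_⟩
  intro G _ _ A K ε k hA2 hK1 hε hk3 hdoub hlarge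
  rw [nsum_eq A k] at hlarge ⊢
  have hAne : A.Nonempty := card_pos.1 (by omega)
  have hK0 : (0:ℝ) < K := lt_of_lt_of_le one_pos hK1
  have hA0 : (0 : ℚ≥0) < (A.card : ℚ≥0) := by exact_mod_cast hAne.card_pos
  set L₀ : ℚ≥0 := 2 * ((A + A).card : ℚ≥0) / (A.card : ℚ≥0) with hL₀
  have hL : ∀ X ⊆ A, X.Nonempty → A.card < 2 * X.card → ((X + A).card : ℚ≥0) ≤ L₀ * X.card := by
    intro X hX hXne hlt
    have h1 : ((X + A).card : ℚ≥0) ≤ ((A + A).card : ℚ≥0) := by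
      exact_mod_cast card_le_card (add_subset_add_right hX)
    refine h1.trans ?_
    rw [hL₀, div_mul_eq_mul_div, le_div_iff₀ hA0]
    have h2 : (A.card : ℚ≥0) ≤ 2 * X.card := by exact_mod_cast hlt.le
    calc ((A + A).card : ℚ≥0) * A.card
        ≤ ((A + A).card : ℚ≥0) * (2 * X.card) := mul_le_mul_right h2 _
      _ = 2 * ((A + A).card : ℚ≥0) * X.card := by ring
  obtain ⟨A', hA'A, hhalf, hbound⟩ := greedy A k A L₀ hL A.card A le_rfl Finset.Subset.rfl
    (by omega) (by simp)
  refine ⟨A', hA'A, by exact_mod_cast hhalf, ?_⟩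
  intro Λ hΛA' hdiss
  have hkAne : (k • A).Nonempty := nsmul_nonempty A hAne k
  have hT2 : 2 ≤ (k • A).card := le_trans hA2 (card_le_card_nsmul A hAne k (by omega))
  have hT0R : (0:ℝ) < ((k • A).card : ℝ) := by
    have := hkAne.card_pos
    exact_mod_cast this
  set L : ℝ := 2 ^ k * K ^ ε with hLdef
  have hKε1 : (1:ℝ) ≤ K ^ ε := by
    have h : K ^ (0:ℝ) ≤ K ^ ε := Real.rpow_le_rpow_of_exponent_le hK1 hε.le
    simpa [Real.rpow_zero] using h
  have h2k : (1:ℝ) ≤ 2 ^ k := by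
    have : (1:ℝ) = 1 ^ k := (one_pow k).symm
    rw [this]
    exact pow_le_pow_left₀ zero_le_one (by norm_num) k
  have hL1 : (1:ℝ) ≤ L := by
    rw [hLdef]
    simpa using mul_le_mul h2k hKε1 zero_le_one (le_trans zero_le_one h2k)
  have hL0 : (0:ℝ) ≤ L := le_trans zero_le_one hL1
  -- main bound : |k•A + Λ| ≤ L * |k•A|
  have hcast : ((A' + k • A).card : ℝ) ≤ (2 * K) ^ k * A.card := by
    have hb : ((A' + k • A).card : ℝ) ≤ ((L₀ : ℝ)) ^ k * A'.card := by
      exact_mod_cast hbound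
    have hL₀le : (L₀ : ℝ) ≤ 2 * K := by
      rw [hL₀]
      push_cast
      rw [div_le_iff₀ (by exact_mod_cast hAne.card_pos)]
      nlinarith
    refine hb.trans ?_
    have h1 : ((L₀ : ℝ)) ^ k ≤ (2 * K) ^ k := pow_le_pow_left₀ (by positivity) hL₀le k
    have h2 : (A'.card : ℝ) ≤ A.card := by exact_mod_cast card_le_card hA'A
    have h3 : (0:ℝ) ≤ ((L₀:ℝ)) ^ k := by positivity
    nlinarith
  have hmain : ((k • A + Λ).card : ℝ) ≤ L * (k • A).card := by
    have hsub1 : k • A + Λ ⊆ k • A + A' := add_subset_add_left hΛA'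
    have e1 : ((k • A + Λ).card : ℝ) ≤ ((A' + k • A).card : ℝ) := by
      rw [add_comm (A' : Finset G) (k • A)]
      exact_mod_cast card_le_card hsub1
    have e2 : (K:ℝ) ^ (k:ℕ) * A.card ≤ K ^ ε * (k • A).card := by
      have hsplit : (K:ℝ) ^ (k:ℕ) = K ^ ε * K ^ ((k:ℝ) - ε) := by
        rw [← Real.rpow_natCast K k, ← Real.rpow_add hK0]
        ring_nf
      rw [hsplit, mul_assoc]
      exact mul_le_mul_of_nonneg_left hlarge (by positivity)
    calc ((k • A + Λ).card : ℝ) ≤ ((A' + k • A).card : ℝ) := e1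
      _ ≤ (2 * K) ^ k * A.card := hcast
      _ = 2 ^ k * ((K:ℝ) ^ (k:ℕ) * A.card) := by rw [mul_pow]; ring
      _ ≤ 2 ^ k * (K ^ ε * (k • A).card) := by
          refine mul_le_mul_of_nonneg_left e2 (by positivity)
      _ = L * (k • A).card := by rw [hLdef]; ring
  -- Pluennecke for Λ with base k•A
  have hplu : ∀ j : ℕ, ((j • Λ).card : ℝ) ≤ L ^ j * (k • A).card := by
    intro j
    have h := Finset.pluennecke_ruzsa_inequality_nsmul_add hkAne Λ j
    have hc0 : (0:ℚ≥0) < ((k • A).card : ℚ≥0) := by exact_mod_cast hkAne.card_pos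
    have hnat : ((j • Λ).card) * ((k • A).card) ^ j
        ≤ ((k • A + Λ).card) ^ j * (k • A).card := by
      have h' : ((j • Λ).card : ℚ≥0) * ((k • A).card : ℚ≥0) ^ j
          ≤ ((k • A + Λ).card : ℚ≥0) ^ j * ((k • A).card : ℚ≥0) := by
        calc ((j • Λ).card : ℚ≥0) * ((k • A).card : ℚ≥0) ^ j
            ≤ ((((k • A + Λ).card : ℚ≥0) / ((k • A).card : ℚ≥0)) ^ j
                * ((k • A).card : ℚ≥0)) * ((k • A).card : ℚ≥0) ^ j :=
              mul_le_mul_left h _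
          _ = ((k • A + Λ).card : ℚ≥0) ^ j * ((k • A).card : ℚ≥0) := by
              rw [div_pow]
              field_simp
      exact_mod_cast h'
    have hR : ((j • Λ).card : ℝ) * ((k • A).card : ℝ) ^ j
        ≤ (L ^ j * ((k • A).card : ℝ)) * ((k • A).card : ℝ) ^ j := by
      have hR1 : ((j • Λ).card : ℝ) * ((k • A).card : ℝ) ^ j
          ≤ ((k • A + Λ).card : ℝ) ^ j * ((k • A).card : ℝ) := by exact_mod_cast hnat
      refine hR1.trans ?_
      have hstep : ((k • A + Λ).card : ℝ) ^ j ≤ (L * ((k • A).card : ℝ)) ^ j :=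
        pow_le_pow_left₀ (by positivity) hmain j
      calc ((k • A + Λ).card : ℝ) ^ j * ((k • A).card : ℝ)
          ≤ (L * ((k • A).card : ℝ)) ^ j * ((k • A).card : ℝ) :=
            mul_le_mul_of_nonneg_right hstep hT0R.le
        _ = (L ^ j * ((k • A).card : ℝ)) * ((k • A).card : ℝ) ^ j := by
            rw [mul_pow]; ring
    exact le_of_mul_le_mul_right hR (by positivity)
  have hchoose : ∀ j : ℕ, (Λ.card.choose j : ℝ) ≤ L ^ j * (k • A).card := fun j =>
    le_trans (by exact_mod_cast choose_le_card_nsmul Λ hdiss j) (hplu j)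
  have hend := endgame Λ.card (k • A).card L hT2 hL1 hchoose
  calc (Λ.card : ℝ) ≤ 9 * L * Real.log ((k • A).card) := hend
    _ = 9 * 2 ^ k * K ^ ε * Real.log ((k • A).card) := by rw [hLdef]; ring
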